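/- Define I : ℝ → ℂ by I(α) = (1/√(2π)) · ∫_ℝ exp(−x²/2 + i·α·x³) dx, and let α : ℕ → ℝ be a sequence. If the partial products ∏_{k=1}^{N} I(α_k) converge, as N → ∞, to a limit L with L real and L > 0, then α_k → 0 as k → ∞. -/

import Mathlib

open MeasureTheory Real Filter

/-- The cubic-model integral `I(α) = (1/√(2π)) ∫ exp(-x²/2 + iαx³) dx`. -/
noncomputable def cubicI (α : ℝ) : ℂ :=
  (1 / Real.sqrt (2 * π) : ℝ) *
    ∫ x : ℝ, Complex.exp (-(x : ℂ) ^ 2 / 2 + Complex.I * α * (x : ℂ) ^ 3)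

private lemma cube_surj (t : ℝ) : ∃ x : ℝ, x ^ 3 = t := by
  rcases le_or_gt 0 t with ht | ht
  · exact ⟨t ^ ((3:ℕ):ℝ)⁻¹, Real.rpow_inv_natCast_pow ht (by norm_num)⟩
  · refine ⟨-((-t) ^ ((3:ℕ):ℝ)⁻¹), ?_⟩
    rw [Odd.neg_pow (by decide), Real.rpow_inv_natCast_pow (by linarith) (by norm_num)]
    ring

private lemma integrand_eq (a x : ℝ) :
    Complex.exp (-(x : ℂ) ^ 2 / 2 + Complex.I * a * (x : ℂ) ^ 3)
      = Complex.exp ((-(x ^ 2) / 2 : ℝ)) * Complex.exp ((a * x ^ 3 : ℝ) * Complex.I) := by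
  rw [← Complex.exp_add]
  push_cast
  ring_nf

private lemma integrand_norm (a x : ℝ) :
    ‖Complex.exp (-(x : ℂ) ^ 2 / 2 + Complex.I * a * (x : ℂ) ^ 3)‖
      = Real.exp (-(x ^ 2) / 2) := by
  rw [integrand_eq, norm_mul,
    Complex.norm_exp_ofReal, Complex.norm_exp_ofReal_mul_I, mul_one]

private lemma integrand_cont (a : ℝ) :
    Continuous fun x : ℝ => Complex.exp (-(x : ℂ) ^ 2 / 2 + Complex.I * a * (x : ℂ) ^ 3) := by
  fun_prop

private lemma integrand_integrable (a : ℝ) :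
    Integrable (fun x : ℝ => Complex.exp (-(x : ℂ) ^ 2 / 2 + Complex.I * a * (x : ℂ) ^ 3)) := by
  refine Integrable.mono' (g := fun x : ℝ => Real.exp (-(1/2) * x ^ 2)) ?_
    (integrand_cont a).aestronglyMeasurable ?_
  · exact integrable_exp_neg_mul_sq (by norm_num)
  · refine Eventually.of_forall fun x => ?_
    rw [integrand_norm]
    exact le_of_eq (by ring_nf)

private lemma sqrt_two_pi_pos : 0 < Real.sqrt (2 * π) :=
  Real.sqrt_pos.2 (by positivity)

private lemma gaussian_int : ∫ x : ℝ, Real.exp (-(x ^ 2) / 2) = Real.sqrt (2 * π) := by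
  have := integral_gaussian (1/2)
  rw [show π / (1/2) = 2 * π by ring] at this
  rw [← this]
  congr 1 with x
  ring_nf

private lemma gauss_integrable : Integrable (fun x : ℝ => Real.exp (-(x ^ 2) / 2)) := by
  have h := integrable_exp_neg_mul_sq (show (0:ℝ) < 1/2 by norm_num)
  exact h.congr (Eventually.of_forall fun x => by ring_nf)

private lemma cos_int_integrable (a : ℝ) :
    Integrable (fun x : ℝ => Real.exp (-(x ^ 2) / 2) * Real.cos (a * x ^ 3)) := by
  refine Integrable.mono' gauss_integrable
    ((by fun_prop : Continuous fun x : ℝ => Real.exp (-(x ^ 2) / 2) * Real.cos (a * x ^ 3)).aestronglyMeasurable) ?_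
  refine Eventually.of_forall fun x => ?_
  rw [Real.norm_eq_abs, abs_mul, abs_of_pos (Real.exp_pos _)]
  calc Real.exp (-(x ^ 2) / 2) * |Real.cos (a * x ^ 3)|
      ≤ Real.exp (-(x ^ 2) / 2) * 1 :=
        mul_le_mul_of_nonneg_left (Real.abs_cos_le_one _) (Real.exp_pos _).le
    _ = _ := mul_one _

private lemma cubicI_ne_one {a : ℝ} (ha : a ≠ 0) : cubicI a ≠ 1 := by
  intro h1
  have hs : Real.sqrt (2 * π) ≠ 0 := ne_of_gt sqrt_two_pi_pos
  have hJ : (∫ x : ℝ, Complex.exp (-(x : ℂ) ^ 2 / 2 + Complex.I * a * (x : ℂ) ^ 3))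
      = (Real.sqrt (2 * π) : ℂ) := by
    rw [cubicI] at h1
    have h2 := congrArg (fun z : ℂ => (Real.sqrt (2 * π) : ℂ) * z) h1
    rwa [← mul_assoc, ← Complex.ofReal_mul, mul_one_div, div_self hs, Complex.ofReal_one,
      one_mul, mul_one] at h2
  have h3 : ∀ x : ℝ, (Complex.exp (-(x : ℂ) ^ 2 / 2 + Complex.I * a * (x : ℂ) ^ 3)).re
      = Real.exp (-(x ^ 2) / 2) * Real.cos (a * x ^ 3) := fun x => by
    rw [integrand_eq, ← Complex.ofReal_exp, Complex.re_ofReal_mul, Complex.exp_ofReal_mul_I_re]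
  have hre : ∫ x : ℝ, Real.exp (-(x ^ 2) / 2) * Real.cos (a * x ^ 3) = Real.sqrt (2 * π) := by
    have h4 := integral_re (μ := volume) (integrand_integrable a)
    rw [hJ] at h4
    simp only [RCLike.re_to_complex, Complex.ofReal_re] at h4
    rw [← h4]
    exact integral_congr_ae (Eventually.of_forall fun x => (h3 x).symm)
  set P : ℝ → ℝ := fun x => Real.exp (-(x ^ 2) / 2) - Real.exp (-(x ^ 2) / 2) * Real.cos (a * x ^ 3)
    with hP
  have hPint : Integrable P := gauss_integrable.sub (cos_int_integrable a)
  have hPzero : ∫ x, P x = 0 := by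
    rw [integral_sub gauss_integrable (cos_int_integrable a), gaussian_int, hre, sub_self]
  have hPnonneg : ∀ x, 0 ≤ P x := fun x => by
    have h4 : Real.exp (-(x ^ 2) / 2) * Real.cos (a * x ^ 3) ≤ Real.exp (-(x ^ 2) / 2) * 1 :=
      mul_le_mul_of_nonneg_left (Real.cos_le_one _) (Real.exp_pos _).le
    simp only [hP, mul_one] at *
    linarith
  obtain ⟨x₀, hx₀⟩ := cube_surj (π / a)
  have hax : a * x₀ ^ 3 = π := by rw [hx₀]; field_simp
  have hPx₀ : 0 < P x₀ := by
    have h4 := Real.exp_pos (-(x₀ ^ 2) / 2)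
    simp only [hP, hax, Real.cos_pi, mul_neg_one, sub_neg_eq_add]
    linarith
  have hPc : Continuous P := by rw [hP]; fun_prop
  have hopen : IsOpen (Function.support P) := by
    exact isOpen_compl_singleton.preimage hPc
  have hpos : 0 < ∫ x, P x := by
    rw [integral_pos_iff_support_of_nonneg hPnonneg hPint]
    exact hopen.measure_pos volume ⟨x₀, ne_of_gt hPx₀⟩
  rw [hPzero] at hpos
  exact lt_irrefl _ hpos

/-- density after the change of variables `y = x³`. -/
private noncomputable def cubicG (y : ℝ) : ℂ :=
  ((Real.exp (-(|y| ^ ((2:ℝ)/3)) / 2) / (3 * |y| ^ ((2:ℝ)/3))) : ℝ)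

private lemma cubicG_comp (x : ℝ) (_hx : x ≠ 0) :
    cubicG (x ^ 3) = ((Real.exp (-(x ^ 2) / 2) / (3 * x ^ 2)) : ℝ) := by
  have h1 : |x ^ 3| ^ ((2:ℝ)/3) = x ^ 2 := by
    rw [abs_pow, ← Real.rpow_natCast |x| 3, ← Real.rpow_mul (abs_nonneg x)]
    norm_num
  rw [cubicG, h1]

private lemma cube_image : (fun x : ℝ => x ^ 3) '' Set.univ = Set.univ := by
  rw [Set.image_univ, Set.range_eq_univ]
  intro t
  exact cube_surj t

private lemma cov (a : ℝ) :
    (∫ x : ℝ, Complex.exp (-(x : ℂ) ^ 2 / 2 + Complex.I * a * (x : ℂ) ^ 3))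
      = ∫ y : ℝ, Complex.exp ((a * y : ℝ) * Complex.I) * cubicG y := by
  have hderiv : ∀ x ∈ (Set.univ : Set ℝ),
      HasDerivWithinAt (fun x : ℝ => x ^ 3) (3 * x ^ 2) Set.univ x := by
    intro x _
    rw [hasDerivWithinAt_univ]
    have h := hasDerivAt_pow 3 x
    norm_num at h
    exact h
  have hinj : Set.InjOn (fun x : ℝ => x ^ 3) Set.univ :=
    Set.injOn_of_injective (Odd.strictMono_pow (by decide)).injective
  have h := integral_image_eq_integral_abs_deriv_smul MeasurableSet.univ hderiv hinj
    (fun y => Complex.exp ((a * y : ℝ) * Complex.I) * cubicG y)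
  rw [cube_image] at h
  rw [MeasureTheory.setIntegral_univ, MeasureTheory.setIntegral_univ] at h
  rw [h]
  refine integral_congr_ae ?_
  have h0 : ∀ᵐ x : ℝ, x ≠ 0 := by
    rw [ae_iff]
    simp only [ne_eq, not_not, Set.setOf_eq_eq_singleton]
    exact measure_singleton 0
  filter_upwards [h0] with x hx
  rw [cubicG_comp x hx, integrand_eq]
  have h2 : (x:ℝ) ^ 2 ≠ 0 := pow_ne_zero 2 hx
  rw [Complex.real_smul]
  push_cast
  have h3 : |3 * x ^ 2| = 3 * x ^ 2 := abs_of_pos (by positivity)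
  rw [h3]
  push_cast
  have hxc : (x:ℂ) ≠ 0 := Complex.ofReal_ne_zero.2 hx
  field_simp

private lemma cubicI_tendsto_cocompact : Tendsto cubicI (cocompact ℝ) (nhds 0) := by
  have hπ : (2 * π) ≠ 0 := by positivity
  have hchar : ∀ a v : ℝ,
      (Real.fourierChar (-(v * (a * (-1 / (2 * π)))))) • cubicG v
        = Complex.exp ((a * v : ℝ) * Complex.I) * cubicG v := by
    intro a v
    rw [Circle.smul_def, Real.fourierChar_apply]
    congr 2
    have hπc : (π:ℂ) ≠ 0 := Complex.ofReal_ne_zero.2 Real.pi_ne_zero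
    push_cast
    field_simp
  have hRL := Real.tendsto_integral_exp_smul_cocompact cubicG
  have hm : Tendsto (fun a : ℝ => a * (-1 / (2 * π))) (cocompact ℝ) (cocompact ℝ) := by
    have h := Homeomorph.map_cocompact
      (Homeomorph.mulRight₀ (-1 / (2 * π)) (div_ne_zero (by norm_num) hπ))
    exact le_of_eq h
  have hJ : Tendsto (fun a : ℝ =>
      ∫ x : ℝ, Complex.exp (-(x : ℂ) ^ 2 / 2 + Complex.I * a * (x : ℂ) ^ 3))
      (cocompact ℝ) (nhds 0) := by
    have hcomp := hRL.comp hm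
    refine hcomp.congr fun a => ?_
    rw [cov a]
    exact integral_congr_ae (Eventually.of_forall fun v => hchar a v)
  have h2 := hJ.const_mul (((1 / Real.sqrt (2 * π) : ℝ)) : ℂ)
  rw [mul_zero] at h2
  exact h2

private lemma cubicI_seq_cont {b : ℝ} {u : ℕ → ℝ} (hu : Tendsto u atTop (nhds b)) :
    Tendsto (fun j => cubicI (u j)) atTop (nhds (cubicI b)) := by
  have hint : Tendsto (fun j => ∫ x : ℝ,
      Complex.exp (-(x : ℂ) ^ 2 / 2 + Complex.I * (u j) * (x : ℂ) ^ 3)) atTop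
      (nhds (∫ x : ℝ, Complex.exp (-(x : ℂ) ^ 2 / 2 + Complex.I * b * (x : ℂ) ^ 3))) := by
    refine tendsto_integral_of_dominated_convergence
      (fun x => Real.exp (-(x ^ 2) / 2))
      (fun j => (integrand_cont (u j)).aestronglyMeasurable)
      gauss_integrable
      (fun j => Eventually.of_forall fun x => le_of_eq (integrand_norm _ x))
      (Eventually.of_forall fun x => ?_)
    have hc : Continuous fun t : ℝ =>
        Complex.exp (-(x : ℂ) ^ 2 / 2 + Complex.I * t * (x : ℂ) ^ 3) := by fun_prop
    exact (hc.tendsto b).comp hu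
  exact hint.const_mul _

/-- If the partial products `∏_{k<N} I(α_k)` converge to a real positive limit `L`,
then the coupling sequence tends to zero: `α_k → 0`. -/
theorem tendsto_zero_of_prod_cubicI_pos (α : ℕ → ℝ) (L : ℝ) (hL : 0 < L)
    (h : Tendsto (fun N => ∏ k ∈ Finset.range N, cubicI (α k)) atTop (nhds (L : ℂ))) :
    Tendsto α atTop (nhds 0) := by
  set P : ℕ → ℂ := fun N => ∏ k ∈ Finset.range N, cubicI (α k) with hPdef
  have hL0 : (L : ℂ) ≠ 0 := Complex.ofReal_ne_zero.2 (ne_of_gt hL)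
  -- Step 1 : cubicI (α n) → 1
  have hsucc : Tendsto (fun n => P (n + 1)) atTop (nhds (L : ℂ)) :=
    h.comp (tendsto_add_atTop_nat 1)
  have hdiv : Tendsto (fun n => P (n + 1) / P n) atTop (nhds ((L : ℂ) / L)) :=
    hsucc.div h hL0
  rw [div_self hL0] at hdiv
  have hne : ∀ᶠ n in atTop, P n ≠ 0 := h.eventually_ne hL0
  have h1 : Tendsto (fun n => cubicI (α n)) atTop (nhds 1) := by
    refine hdiv.congr' ?_
    filter_upwards [hne] with n hn
    have hstep : P (n + 1) = P n * cubicI (α n) := Finset.prod_range_succ _ _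
    rw [hstep, mul_div_cancel_left₀ _ hn]
  -- Step 2 : eventual bounds from the cocompact limit
  have hb : ∀ᶠ z : ℂ in nhds 0, ‖z‖ < 1/2 := by
    have := Metric.ball_mem_nhds (0:ℂ) (by norm_num : (0:ℝ) < 1/2)
    filter_upwards [this] with z hz
    simpa [Metric.mem_ball] using hz
  have hcc := cubicI_tendsto_cocompact.eventually hb
  rw [cocompact_eq_atBot_atTop, eventually_sup] at hcc
  obtain ⟨hbot, htop⟩ := hcc
  obtain ⟨A, hA⟩ := eventually_atBot.1 hbot
  obtain ⟨B, hB⟩ := eventually_atTop.1 htop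
  -- Step 3 : eventual bound on ‖cubicI (α n)‖
  have hnorm : Tendsto (fun n => ‖cubicI (α n)‖) atTop (nhds 1) := by
    have := h1.norm
    simpa using this
  have hgt : ∀ᶠ n in atTop, (1:ℝ)/2 < ‖cubicI (α n)‖ :=
    hnorm.eventually_const_lt (by norm_num)
  have hband : ∀ᶠ n in atTop, A < α n ∧ α n < B := by
    filter_upwards [hgt] with n hn
    constructor
    · by_contra hcon
      push_neg at hcon
      exact absurd (hA _ hcon) (by linarith)
    · by_contra hcon
      push_neg at hcon
      exact absurd (hB _ hcon) (by linarith)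
  -- Step 4 : contradiction argument
  by_contra hcon
  rw [Metric.tendsto_atTop] at hcon
  push_neg at hcon
  obtain ⟨ε, hε, hfreq⟩ := hcon
  have hfreq' : ∃ᶠ n in atTop, ε ≤ |α n| ∧ A < α n ∧ α n < B := by
    have hf : ∃ᶠ n in atTop, ε ≤ |α n| := by
      rw [frequently_atTop]
      intro N
      obtain ⟨n, hn1, hn2⟩ := hfreq N
      exact ⟨n, hn1, by simpa [Real.dist_eq] using hn2⟩
    exact hf.and_eventually hband
  obtain ⟨φ, hφmono, hφ⟩ := extraction_of_frequently_atTop hfreq'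
  set β : ℕ → ℝ := fun j => α (φ j) with hβ
  have hβmem : ∀ j, β j ∈ Set.Icc A B := fun j =>
    ⟨(hφ j).2.1.le, (hφ j).2.2.le⟩
  obtain ⟨b, _, ψ, hψmono, hψlim⟩ :=
    tendsto_subseq_of_bounded (Metric.isBounded_Icc A B) hβmem
  have hb0 : b ≠ 0 := by
    have habs : Tendsto (fun j => |β (ψ j)|) atTop (nhds |b|) := hψlim.abs
    have hge : ε ≤ |b| :=
      ge_of_tendsto habs (Eventually.of_forall fun j => (hφ (ψ j)).1)
    intro hb'
    rw [hb', abs_zero] at hge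
    linarith
  have hlim1 : Tendsto (fun j => cubicI (β (ψ j))) atTop (nhds 1) :=
    h1.comp ((hφmono.comp hψmono).tendsto_atTop)
  have hlim2 : Tendsto (fun j => cubicI (β (ψ j))) atTop (nhds (cubicI b)) :=
    cubicI_seq_cont hψlim
  exact cubicI_ne_one hb0 (tendsto_nhds_unique hlim2 hlim1)
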